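/- Let Θ ∈ ℝ^{p×p} be symmetric positive definite and diagonally dominant with ratio ρ: Σ_{j'≠j} |Θ_{j'j}| ≤ ρ·Θ_{jj} for every j, where 0 ≤ ρ < 1. Let α ≥ 0, let Λ = diag(τ₁,…,τ_n) with all τ_i ≥ 0, and let R ∈ ℝ^{n×p}. Suppose W₂ ∈ ℝ^{n×p} satisfies W₂Θ + αΛW₂ = R, and define W₃ = (I + αΛ)^{−1}R, i.e., W₃_{ij} = R_{ij}/(1 + ατ_i). Then (1 − ρ)·min(1, min_j Θ_{jj})·‖W₂‖_∞ ≤ ‖W₃‖_∞ ≤ (1 + ρ)·max(1, max_j Θ_{jj})·‖W₂‖_∞. -/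

import Mathlib

open Matrix Finset

/-- The maximum absolute entry norm `‖M‖_∞ = max_{ij} |M_{ij}|` of a matrix. -/
noncomputable def maxAbsEntry {n p : ℕ} (M : Matrix (Fin n) (Fin p) ℝ) : ℝ :=
  ⨆ i, ⨆ j, |M i j|

lemma le_maxAbsEntry {n p : ℕ} (M : Matrix (Fin n) (Fin p) ℝ) (i : Fin n) (j : Fin p) :
    |M i j| ≤ maxAbsEntry M := by
  have h1 : |M i j| ≤ ⨆ j, |M i j| :=
    le_ciSup (f := fun j => |M i j|) (Set.Finite.bddAbove (Set.finite_range _)) j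
  exact h1.trans (le_ciSup (f := fun i => ⨆ j, |M i j|)
    (Set.Finite.bddAbove (Set.finite_range _)) i)

lemma maxAbsEntry_le {n p : ℕ} (hn : 0 < n) (hp : 0 < p)
    (M : Matrix (Fin n) (Fin p) ℝ) (c : ℝ) (h : ∀ i j, |M i j| ≤ c) :
    maxAbsEntry M ≤ c := by
  have : Nonempty (Fin n) := ⟨⟨0, hn⟩⟩
  have : Nonempty (Fin p) := ⟨⟨0, hp⟩⟩
  exact ciSup_le fun i => ciSup_le fun j => h i j

lemma maxAbsEntry_nonneg {n p : ℕ} (hn : 0 < n) (hp : 0 < p)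
    (M : Matrix (Fin n) (Fin p) ℝ) : 0 ≤ maxAbsEntry M :=
  le_trans (abs_nonneg _) (le_maxAbsEntry M ⟨0, hn⟩ ⟨0, hp⟩)

theorem weighted_vs_unweighted_smoothing_error
    (n p : ℕ) (hn : 0 < n) (hp : 0 < p)
    (Θ : Matrix (Fin p) (Fin p) ℝ) (hΘ : Θ.PosDef)
    (ρ : ℝ) (hρ₀ : 0 ≤ ρ) (hρ₁ : ρ < 1)
    (hdom : ∀ j, ∑ j' ∈ Finset.univ.erase j, |Θ j' j| ≤ ρ * Θ j j)
    (α : ℝ) (hα : 0 ≤ α) (τ : Fin n → ℝ) (hτ : ∀ i, 0 ≤ τ i)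
    (R : Matrix (Fin n) (Fin p) ℝ)
    (W₂ : Matrix (Fin n) (Fin p) ℝ)
    (hW₂ : W₂ * Θ + α • (Matrix.diagonal τ * W₂) = R) :
    let W₃ : Matrix (Fin n) (Fin p) ℝ := Matrix.of fun i j => R i j / (1 + α * τ i)
    (1 - ρ) * min 1 (⨅ j, Θ j j) * maxAbsEntry W₂ ≤ maxAbsEntry W₃ ∧
      maxAbsEntry W₃ ≤ (1 + ρ) * max 1 (⨆ j, Θ j j) * maxAbsEntry W₂ := by
  intro W₃
  have : Nonempty (Fin n) := ⟨⟨0, hn⟩⟩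
  have : Nonempty (Fin p) := ⟨⟨0, hp⟩⟩
  set m := maxAbsEntry W₂ with hm
  have hm0 : 0 ≤ m := maxAbsEntry_nonneg hn hp W₂
  -- diagonal entries of Θ are positive
  have hdiag : ∀ j, 0 < Θ j j := by
    intro j
    have := hΘ.dotProduct_mulVec_pos (x := Pi.single j 1) (by
      intro h
      have := congrFun h j
      simp at this)
    simpa [dotProduct, mulVec, Pi.single_apply, Finset.sum_ite_eq] using this
  -- entries of R
  have hR : ∀ i j, R i j = ∑ k, W₂ i k * Θ k j + α * (τ i * W₂ i j) := by
    intro i j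
    have := congrFun (congrFun hW₂ i) j
    simpa [Matrix.add_apply, Matrix.mul_apply, Matrix.smul_apply, Matrix.diagonal_apply,
      ite_mul, Finset.sum_ite_eq, Finset.mem_univ] using this.symm
  have hden : ∀ i : Fin n, 0 < 1 + α * τ i := by
    intro i
    have := mul_nonneg hα (hτ i)
    linarith
  -- bound on off-diagonal part of the sum
  have hoff : ∀ i j, |∑ k ∈ Finset.univ.erase j, W₂ i k * Θ k j| ≤ m * (ρ * Θ j j) := by
    intro i j
    calc |∑ k ∈ Finset.univ.erase j, W₂ i k * Θ k j|
        ≤ ∑ k ∈ Finset.univ.erase j, |W₂ i k * Θ k j| := Finset.abs_sum_le_sum_abs _ _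
      _ ≤ ∑ k ∈ Finset.univ.erase j, m * |Θ k j| := by
          refine Finset.sum_le_sum fun k _ => ?_
          rw [abs_mul]
          exact mul_le_mul_of_nonneg_right (le_maxAbsEntry W₂ i k) (abs_nonneg _)
      _ = m * ∑ k ∈ Finset.univ.erase j, |Θ k j| := by rw [Finset.mul_sum]
      _ ≤ m * (ρ * Θ j j) := mul_le_mul_of_nonneg_left (hdom j) hm0
  have hsplit : ∀ i j, ∑ k, W₂ i k * Θ k j
      = W₂ i j * Θ j j + ∑ k ∈ Finset.univ.erase j, W₂ i k * Θ k j := by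
    intro i j
    exact (Finset.add_sum_erase Finset.univ _ (Finset.mem_univ j)).symm
  constructor
  · -- lower bound
    obtain ⟨⟨i, j⟩, hmax⟩ := Finite.exists_max (fun q : Fin n × Fin p => |W₂ q.1 q.2|)
    have hmeq : m = |W₂ i j| := by
      refine le_antisymm (maxAbsEntry_le hn hp _ _ fun i' j' => hmax (i', j')) ?_
      exact le_maxAbsEntry W₂ i j
    -- |R i j| ≥ (Θ j j + α τ i) m - ρ Θ j j m
    have hRij : R i j = (Θ j j + α * τ i) * W₂ i j
        + ∑ k ∈ Finset.univ.erase j, W₂ i k * Θ k j := by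
      rw [hR i j, hsplit i j]; ring
    have h1 : (Θ j j + α * τ i) * m - m * (ρ * Θ j j) ≤ |R i j| := by
      rw [hRij]
      have habs : |(Θ j j + α * τ i) * W₂ i j| = (Θ j j + α * τ i) * m := by
        rw [abs_mul, hmeq, abs_of_pos (by have := mul_nonneg hα (hτ i); linarith [hdiag j] : 0 < Θ j j + α * τ i)]
      calc (Θ j j + α * τ i) * m - m * (ρ * Θ j j)
          ≤ |(Θ j j + α * τ i) * W₂ i j| - |∑ k ∈ Finset.univ.erase j, W₂ i k * Θ k j| := by
            rw [habs]; linarith [hoff i j]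
        _ ≤ |(Θ j j + α * τ i) * W₂ i j + ∑ k ∈ Finset.univ.erase j, W₂ i k * Θ k j| := by
            have := abs_add_le ((Θ j j + α * τ i) * W₂ i j + ∑ k ∈ Finset.univ.erase j, W₂ i k * Θ k j)
              (-(∑ k ∈ Finset.univ.erase j, W₂ i k * Θ k j))
            simp only [add_neg_cancel_right, abs_neg] at this
            linarith
    set μ := (1 - ρ) * min 1 (⨅ j, Θ j j) with hμ
    have hμle1 : μ ≤ 1 := by
      have : min 1 (⨅ j, Θ j j) ≤ 1 := min_le_left _ _
      nlinarith
    have hμleΘ : μ ≤ (1 - ρ) * Θ j j := by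
      have h1' : min 1 (⨅ j, Θ j j) ≤ ⨅ j, Θ j j := min_le_right _ _
      have h2' : (⨅ j', Θ j' j') ≤ Θ j j :=
        ciInf_le (Set.Finite.bddBelow (Set.finite_range _)) j
      nlinarith
    have key : μ * (1 + α * τ i) * m ≤ |R i j| := by
      have h2 : μ * (1 + α * τ i) * m ≤ ((1 - ρ) * Θ j j + α * τ i) * m := by
        have hτi : 0 ≤ α * τ i := mul_nonneg hα (hτ i)
        have : μ * (1 + α * τ i) ≤ (1 - ρ) * Θ j j + α * τ i := by nlinarith
        exact mul_le_mul_of_nonneg_right this hm0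
      have h3 : ((1 - ρ) * Θ j j + α * τ i) * m ≤ (Θ j j + α * τ i) * m - m * (ρ * Θ j j) := by
        ring_nf; nlinarith
      linarith
    have hW₃ij : μ * m ≤ |W₃ i j| := by
      have : W₃ i j = R i j / (1 + α * τ i) := rfl
      rw [this, abs_div, abs_of_pos (hden i), le_div_iff₀ (hden i)]
      calc μ * m * (1 + α * τ i) = μ * (1 + α * τ i) * m := by ring
        _ ≤ |R i j| := key
    exact hW₃ij.trans (le_maxAbsEntry W₃ i j)
  · -- upper bound
    set S := max 1 (⨆ j, Θ j j) with hS
    have hSΘ : ∀ j, Θ j j ≤ S := fun j =>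
      le_trans (le_ciSup (f := fun j => Θ j j) (Set.Finite.bddAbove (Set.finite_range _)) j)
        (le_max_right _ _)
    have hS1 : (1 : ℝ) ≤ S := le_max_left _ _
    refine maxAbsEntry_le hn hp _ _ fun i j => ?_
    have hup : |R i j| ≤ (1 + ρ) * S * m * (1 + α * τ i) := by
      rw [hR i j, hsplit i j]
      have h1 : |W₂ i j * Θ j j| ≤ m * Θ j j := by
        rw [abs_mul, abs_of_pos (hdiag j)]
        exact mul_le_mul_of_nonneg_right (le_maxAbsEntry W₂ i j) (hdiag j).le
      have h2 : |α * (τ i * W₂ i j)| ≤ α * τ i * m := by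
        rw [abs_mul, abs_mul, abs_of_nonneg hα, abs_of_nonneg (hτ i), mul_assoc]
        exact mul_le_mul_of_nonneg_left
          (mul_le_mul_of_nonneg_left (le_maxAbsEntry W₂ i j) (hτ i)) hα
      have htri : |W₂ i j * Θ j j + ∑ k ∈ Finset.univ.erase j, W₂ i k * Θ k j
          + α * (τ i * W₂ i j)|
          ≤ |W₂ i j * Θ j j| + |∑ k ∈ Finset.univ.erase j, W₂ i k * Θ k j|
            + |α * (τ i * W₂ i j)| :=
        (abs_add_le _ _).trans (by gcongr; exact abs_add_le _ _)
      have hΘS := hSΘ j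
      have hτi : 0 ≤ α * τ i := mul_nonneg hα (hτ i)
      have hoffb := hoff i j
      have hΘpos := (hdiag j).le
      have e1 : m * Θ j j + m * (ρ * Θ j j) ≤ (1 + ρ) * S * m := by
        nlinarith [mul_le_mul_of_nonneg_left (mul_le_mul_of_nonneg_left hΘS hm0)
          (by linarith : (0:ℝ) ≤ 1 + ρ)]
      have hS' : (1:ℝ) ≤ (1 + ρ) * S := by nlinarith
      have e2 : α * τ i * m ≤ (1 + ρ) * S * m * (α * τ i) := by
        have : m ≤ (1 + ρ) * S * m := by nlinarith
        nlinarith [mul_le_mul_of_nonneg_left this hτi]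
      have expand : (1 + ρ) * S * m * (1 + α * τ i)
          = (1 + ρ) * S * m + (1 + ρ) * S * m * (α * τ i) := by ring
      linarith
    have : W₃ i j = R i j / (1 + α * τ i) := rfl
    rw [this, abs_div, abs_of_pos (hden i), div_le_iff₀ (hden i)]
    exact hup
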